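/- Let f be a permutation of a set x, and let y be the set of all non-trivial orbits of f (orbits of size at least 2). Then there is an injection from the power set of y into the set of all permutations of x, sending each set u of non-trivial orbits to the permutation agreeing with f on ⋃u and the identity elsewhere. Hence 2^|y| ≤ |S(x)|. -/

import Mathlib

/-- Let `f` be a permutation of `x` and let `y` be the set of non-trivial orbits of `f`.
Then the power set of `y` injects into the permutations of `x`, by sending a set `u` of
non-trivial orbits to the permutation agreeing with `f` on `⋃ u` and identity elsewhere. -/
theorem powerset_orbits_inject {x : Type*} (f : Equiv.Perm x) :
    ∀ (orb : x → Set x), (orb = fun z => {v | ∃ n : ℕ, v = (f ^ n) z ∨ z = (f ^ n) v}) →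
    ∀ (y : Set (Set x)), (y = {s | ∃ z, f z ≠ z ∧ s = orb z}) →
    ∃ F : Set y → Equiv.Perm x, Function.Injective F ∧
      ∀ (u : Set y) (z : x),
        ((∃ s ∈ u, z ∈ (s : Set x)) → F u z = f z) ∧
        ((∀ s ∈ u, z ∉ (s : Set x)) → F u z = z) := by
  classical
  intro orb horb y hy
  -- orbit membership via integer powers
  have horb' : ∀ z v, v ∈ orb z ↔ ∃ k : ℤ, v = (f ^ k) z := by
    intro z v
    rw [horb]
    simp only [Set.mem_setOf_eq]
    constructor
    · rintro ⟨n, h | h⟩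
      · exact ⟨n, by simpa [zpow_natCast] using h⟩
      · refine ⟨-(n : ℤ), ?_⟩
        rw [zpow_neg, zpow_natCast, h]
        simp
    · rintro ⟨k, rfl⟩
      obtain ⟨n, rfl | rfl⟩ := k.eq_nat_or_neg
      · exact ⟨n, Or.inl (by simp [zpow_natCast])⟩
      · exact ⟨n, Or.inr (by simp [zpow_neg, zpow_natCast])⟩
  have hself : ∀ z, z ∈ orb z := fun z => (horb' z z).2 ⟨0, by simp⟩
  have hstab : ∀ z v, v ∈ orb z → orb v = orb z := by
    intro z v hv
    obtain ⟨k, rfl⟩ := (horb' z v).1 hv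
    ext w
    rw [horb', horb']
    constructor
    · rintro ⟨m, rfl⟩
      exact ⟨m + k, by rw [zpow_add]; rfl⟩
    · rintro ⟨m, rfl⟩
      exact ⟨m - k, by rw [sub_eq_add_neg, zpow_add]; simp [zpow_neg]⟩
  have hmemf : ∀ z v, v ∈ orb z → f v ∈ orb z := by
    intro z v hv
    obtain ⟨k, rfl⟩ := (horb' z v).1 hv
    exact (horb' z _).2 ⟨1 + k, by rw [zpow_add, zpow_one]; rfl⟩
  have hmemfi : ∀ z v, v ∈ orb z → f⁻¹ v ∈ orb z := by
    intro z v hv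
    obtain ⟨k, rfl⟩ := (horb' z v).1 hv
    exact (horb' z _).2 ⟨-1 + k, by rw [zpow_add, zpow_neg, zpow_one]; rfl⟩
  -- all members of a nontrivial orbit are moved by f
  have hmove : ∀ z v, v ∈ orb z → f z ≠ z → f v ≠ v := by
    intro z v hv hz hfv
    apply hz
    have hzv : z ∈ orb v := by rw [hstab z v hv]; exact hself z
    obtain ⟨k, rfl⟩ := (horb' v z).1 hzv
    have : (f ^ k) v = v := Function.IsFixedPt.perm_zpow hfv k
    rw [this, hfv]
  have hmem : ∀ s : ↑y, ∃ w, f w ≠ w ∧ (s : Set x) = orb w := by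
    rintro ⟨s, hs⟩
    rw [hy] at hs
    exact hs
  -- the predicate "z lies in some orbit of u"
  set P : Set y → x → Prop := fun u z => ∃ s : y, s ∈ u ∧ z ∈ (s : Set x) with hP
  have hPiff : ∀ (u : Set y) z, P u (f z) ↔ P u z := by
    intro u z
    constructor
    · rintro ⟨s, hs, hz⟩
      refine ⟨s, hs, ?_⟩
      obtain ⟨w, -, hw⟩ := hmem s
      have := hmemfi w (f z) (by rw [← hw]; exact hz)
      simpa [hw] using this
    · rintro ⟨s, hs, hz⟩
      refine ⟨s, hs, ?_⟩
      obtain ⟨w, -, hw⟩ := hmem s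
      have := hmemf w z (by rw [← hw]; exact hz)
      simpa [hw] using this
  -- the permutation associated to u
  have key : ∀ u : Set y, ∀ z, P u (f⁻¹ z) ↔ P u z := by
    intro u z
    have := hPiff u (f⁻¹ z)
    simpa using this.symm
  refine ⟨fun u =>
    { toFun := fun z => if P u z then f z else z
      invFun := fun z => if P u z then f⁻¹ z else z
      left_inv := ?_
      right_inv := ?_ }, ?_, ?_⟩
  · intro z
    by_cases h : P u z
    · simp only [if_pos h, if_pos ((hPiff u z).2 h)]
      exact f.symm_apply_apply z
    · simp [h]
  · intro z
    by_cases h : P u z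
    · simp only [if_pos h, if_pos ((key u z).2 h)]
      exact f.apply_symm_apply z
    · simp [h]
  · -- injectivity
    intro u v huv
    ext s
    obtain ⟨w, hwmove, hw⟩ := hmem s
    have hws : w ∈ (s : Set x) := by rw [hw]; exact hself w
    -- membership of w in an orbit of a set determines that the orbit is s
    have unique : ∀ (t : y), w ∈ (t : Set x) → t = s := by
      intro t hwt
      obtain ⟨w', -, hw'⟩ := hmem t
      have : orb w = orb w' := hstab w' w (by rw [← hw']; exact hwt)
      exact Subtype.ext (by rw [hw', hw, this])
    constructor
    · intro hsu
      by_contra hsv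
      have hPu : P u w := ⟨s, hsu, hws⟩
      have hPv : ¬ P v w := by
        rintro ⟨t, htv, hwt⟩
        exact hsv ((unique t hwt) ▸ htv)
      have := congrFun (congrArg (fun (g : Equiv.Perm x) => (g : x → x)) huv) w
      simp only [Equiv.coe_fn_mk, if_pos hPu, if_neg hPv] at this
      exact hwmove this
    · intro hsv
      by_contra hsu
      have hPv : P v w := ⟨s, hsv, hws⟩
      have hPu : ¬ P u w := by
        rintro ⟨t, htu, hwt⟩
        exact hsu ((unique t hwt) ▸ htu)
      have := congrFun (congrArg (fun (g : Equiv.Perm x) => (g : x → x)) huv) w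
      simp only [Equiv.coe_fn_mk, if_neg hPu, if_pos hPv] at this
      exact hwmove this.symm
  · intro u z
    constructor
    · rintro ⟨s, hs, hz⟩
      simp only [Equiv.coe_fn_mk, if_pos (⟨s, hs, hz⟩ : P u z)]
      exact if_pos (⟨s, hs, hz⟩ : P u z)
    · intro h
      have : ¬ P u z := by rintro ⟨s, hs, hz⟩; exact h s hs hz
      simp only [Equiv.coe_fn_mk, if_neg this]
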